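/- The dissimilarity index D7 is a distance (metric) on the set of n×n pairwise comparison matrices: for all n×n PCMs A, B, C, one has D7(A,B) ≥ 0; D7(A,B) = 0 if and only if A = B; D7(A,B) = D7(B,A); and D7(A,C) ≤ D7(A,B) + D7(B,C). -/

import Mathlib

/-- An `n × n` real matrix is a pairwise comparison matrix (PCM) if all entries are
positive and it is reciprocal: `A j i = 1 / A i j`. -/
def IsPCM {n : ℕ} (A : Matrix (Fin n) (Fin n) ℝ) : Prop :=
  ∀ i j, 0 < A i j ∧ A j i = 1 / A i j

/-- The dissimilarity index `D7(A,B) = -min { A i j * B j i - 1 : 1 ≤ i, j ≤ n }`. -/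
noncomputable def D7 {n : ℕ} (A B : Matrix (Fin n) (Fin n) ℝ) : ℝ :=
  -(⨅ i : Fin n, ⨅ j : Fin n, (A i j * B j i - 1))

private lemma key_arith (x y a b : ℝ) (hx : 0 < x) (hy : 0 < y)
    (ha1 : a ≤ x - 1) (ha2 : a ≤ 1/x - 1) (hb1 : b ≤ y - 1) (hb2 : b ≤ 1/y - 1) :
    a + b ≤ x*y - 1 := by
  have ha2' : a * x ≤ 1 - x := by
    have := mul_le_mul_of_nonneg_right ha2 hx.le
    calc a * x ≤ (1/x - 1) * x := this
    _ = 1 - x := by field_simp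
  have hb2' : b * y ≤ 1 - y := by
    have := mul_le_mul_of_nonneg_right hb2 hy.le
    calc b * y ≤ (1/y - 1) * y := this
    _ = 1 - y := by field_simp
  have ha0 : a ≤ 0 := by
    rcases le_or_gt x 1 with h | h
    · linarith
    · have : 1/x < 1 := by rw [div_lt_one hx]; exact h
      linarith
  have hb0 : b ≤ 0 := by
    rcases le_or_gt y 1 with h | h
    · linarith
    · have : 1/y < 1 := by rw [div_lt_one hy]; exact h
      linarith
  rcases le_or_gt 1 (x*y) with h | h
  · linarith
  · rcases le_or_gt x 1 with hx1 | hx1 <;> rcases le_or_gt y 1 with hy1 | hy1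
    · nlinarith
    · nlinarith [mul_le_mul_of_nonneg_right hb2 hx.le]
    · nlinarith [mul_le_mul_of_nonneg_right ha2 hy.le]
    · nlinarith

private lemma inf2_le {n : ℕ} (f : Fin n → Fin n → ℝ) (i j : Fin n) :
    (⨅ i, ⨅ j, f i j) ≤ f i j :=
  le_trans (ciInf_le (Finite.bddBelow_range _) i) (ciInf_le (Finite.bddBelow_range _) j)

private lemma le_inf2 {n : ℕ} [Nonempty (Fin n)] (f : Fin n → Fin n → ℝ) (c : ℝ)
    (h : ∀ i j, c ≤ f i j) : c ≤ ⨅ i, ⨅ j, f i j :=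
  le_ciInf fun i => le_ciInf fun j => h i j

/-- `D7` is a metric on the set of `n × n` pairwise comparison matrices:
nonnegativity, identity of indiscernibles, symmetry, and the triangle inequality. -/
theorem D7_is_metric {n : ℕ} (A B C : Matrix (Fin n) (Fin n) ℝ)
    (hA : IsPCM A) (hB : IsPCM B) (hC : IsPCM C) :
    0 ≤ D7 A B ∧ (D7 A B = 0 ↔ A = B) ∧ D7 A B = D7 B A ∧
      D7 A C ≤ D7 A B + D7 B C := by
  rcases Nat.eq_zero_or_pos n with rfl | hn
  · have hzero : ∀ X Y : Matrix (Fin 0) (Fin 0) ℝ, D7 X Y = 0 := by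
      intro X Y
      simp [D7, Real.iInf_of_isEmpty]
    have heq : A = B := by
      funext i j; exact i.elim0
    simp [hzero, heq]
  · haveI : Nonempty (Fin n) := ⟨⟨0, hn⟩⟩
    have diag : ∀ (X : Matrix (Fin n) (Fin n) ℝ), IsPCM X → ∀ i, X i i = 1 := by
      intro X hX i
      have h1 := (hX i i).1
      have h2 := (hX i i).2
      have h3 : X i i * X i i = 1 := by
        nth_rewrite 1 [h2]
        rw [one_div, inv_mul_cancel₀ h1.ne']
      nlinarith
    -- nonnegativity for any pair of PCMs
    have nonneg : ∀ (X Y : Matrix (Fin n) (Fin n) ℝ), IsPCM X → IsPCM Y → 0 ≤ D7 X Y := by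
      intro X Y hX hY
      have h := inf2_le (fun i j => X i j * Y j i - 1) ⟨0, hn⟩ ⟨0, hn⟩
      simp only [diag X hX, diag Y hY, one_mul, sub_self] at h
      unfold D7
      linarith
    have symm : ∀ (X Y : Matrix (Fin n) (Fin n) ℝ), D7 X Y = D7 Y X := by
      intro X Y
      unfold D7
      congr 1
      apply le_antisymm
      · apply le_inf2
        intro i j
        have := inf2_le (fun i j => X i j * Y j i - 1) j i
        simpa [mul_comm] using this
      · apply le_inf2
        intro i j
        have := inf2_le (fun i j => Y i j * X j i - 1) j i
        simpa [mul_comm] using this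
    refine ⟨nonneg A B hA hB, ?_, symm A B, ?_⟩
    · constructor
      · intro h
        have hm : (⨅ i, ⨅ j, (A i j * B j i - 1)) = 0 := by
          unfold D7 at h; linarith
        funext i j
        have h1 : 0 ≤ A i j * B j i - 1 := by
          have := inf2_le (fun i j => A i j * B j i - 1) i j
          rw [hm] at this; exact this
        have h2 : 0 ≤ A j i * B i j - 1 := by
          have := inf2_le (fun i j => A i j * B j i - 1) j i
          rw [hm] at this; exact this
        have hAij := (hA i j).1
        have hBji := (hB j i).1
        rw [(hA i j).2, (hB j i).2] at h2
        have h2' : A i j * B j i ≤ 1 := by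
          have hx : (0:ℝ) < A i j * B j i := mul_pos hAij hBji
          rw [div_mul_div_comm] at h2
          have : (1:ℝ) ≤ 1 / (A i j * B j i) := by linarith
          rw [le_div_iff₀ hx, one_mul] at this
          exact this
        have heq : A i j * B j i = 1 := le_antisymm h2' (by linarith)
        have hBij : 0 < B i j := (hB i j).1
        rw [(hB i j).2] at heq
        field_simp at heq
        linarith
      · intro h
        subst h
        unfold D7
        have hm : (⨅ i, ⨅ j, (A i j * A j i - 1)) = 0 := by
          have : ∀ i j : Fin n, A i j * A j i - 1 = 0 := by
            intro i j
            rw [(hA i j).2]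
            have := (hA i j).1
            field_simp
            norm_num
          simp [this]
        rw [hm]; ring
    · -- triangle inequality
      unfold D7
      rw [← neg_add]
      apply neg_le_neg
      apply le_inf2
      intro i j
      have hAij := (hA i j).1
      have hBji := (hB j i).1
      have hBij := (hB i j).1
      have hCji := (hC j i).1
      set x := A i j * B j i with hxdef
      set y := B i j * C j i with hydef
      have hx : 0 < x := mul_pos hAij hBji
      have hy : 0 < y := mul_pos hBij hCji
      have hAC : A i j * C j i = x * y := by
        have hB2 := (hB i j).2
        rw [hxdef, hydef, hB2]
        field_simp
      have ha1 := inf2_le (fun i j => A i j * B j i - 1) i j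
      have ha2 : (⨅ i, ⨅ j, (A i j * B j i - 1)) ≤ 1/x - 1 := by
        have := inf2_le (fun i j => A i j * B j i - 1) j i
        rw [(hA i j).2, (hB j i).2] at this
        calc (⨅ i, ⨅ j, (A i j * B j i - 1)) ≤ 1 / A i j * (1 / B j i) - 1 := this
        _ = 1/x - 1 := by rw [hxdef]; rw [div_mul_div_comm, one_mul]
      have hb1 := inf2_le (fun i j => B i j * C j i - 1) i j
      have hb2 : (⨅ i, ⨅ j, (B i j * C j i - 1)) ≤ 1/y - 1 := by
        have := inf2_le (fun i j => B i j * C j i - 1) j i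
        rw [(hB i j).2, (hC j i).2] at this
        calc (⨅ i, ⨅ j, (B i j * C j i - 1)) ≤ 1 / B i j * (1 / C j i) - 1 := this
        _ = 1/y - 1 := by rw [hydef]; rw [div_mul_div_comm, one_mul]
      have := key_arith x y _ _ hx hy ha1 ha2 hb1 hb2
      rw [hAC]
      linarith
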